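/- Let U = exp(K∂₁) be the subgroup generated by a locally nilpotent derivation ∂₁ and V = ∂₂ a homogeneous derivation with e_i ∈ S_i for i = 1,2, c₂ = ⟨ρ₂,e₁⟩ ≥ 1 and δ = ⟨ρ₁,e₂⟩ + 1. Then the Newton polytope of the derivation ∂ = Ad_{exp(∂₁)}(∂₂) = exp(ad_{∂₁})(∂₂) is the line segment [e₂, e₂ + δ e₁] in M_ℚ. -/

import Mathlib

/-- The homogeneous derivation `∂_{ρ,e}` of the (semi)group algebra, defined on the
monomial basis by `∂_{ρ,e}(χ^m) = ⟨ρ,m⟩ χ^{m+e}`. -/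
noncomputable def homDer (K : Type*) [Field K] {M : Type*} [AddCommGroup M]
    (ρ : M →+ ℤ) (e : M) :
    AddMonoidAlgebra K M →ₗ[K] AddMonoidAlgebra K M :=
  (Finsupp.lsum K fun m =>
    LinearMap.toSpanSingleton K (AddMonoidAlgebra K M)
      ((ρ m : ℤ) • AddMonoidAlgebra.single (m + e) (1 : K))) ∘ₗ
    (AddMonoidAlgebra.coeffLinearEquiv K).toLinearMap

lemma homDer_single (K : Type*) [Field K] {M : Type*} [AddCommGroup M]
    (ρ : M →+ ℤ) (e : M) (m : M) (k : K) :
    homDer K ρ e (AddMonoidAlgebra.single m k)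
      = (ρ m : ℤ) • AddMonoidAlgebra.single (m + e) k := by
  rw [homDer, LinearMap.comp_apply]
  erw [Finsupp.lsum_single]
  rw [LinearMap.toSpanSingleton_apply, smul_comm]
  congr 1
  rw [AddMonoidAlgebra.smul_single, smul_eq_mul, mul_one]

lemma homDer_bracket (K : Type*) [Field K] {M : Type*} [AddCommGroup M]
    (ρ₁ ρ : M →+ ℤ) (e₁ e : M) :
    homDer K ρ₁ e₁ ∘ₗ homDer K ρ e - homDer K ρ e ∘ₗ homDer K ρ₁ e₁
      = homDer K (ρ₁ e • ρ - ρ e₁ • ρ₁) (e + e₁) := by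
  refine AddMonoidAlgebra.lhom_ext' fun m => LinearMap.ext fun k => ?_
  rw [LinearMap.comp_apply, LinearMap.comp_apply, AddMonoidAlgebra.lsingle_apply,
    LinearMap.sub_apply, LinearMap.comp_apply, LinearMap.comp_apply]
  rw [homDer_single, homDer_single, map_zsmul, map_zsmul, homDer_single, homDer_single,
    smul_smul, smul_smul, add_right_comm m e₁ e, ← sub_smul, homDer_single]
  rw [← add_assoc]
  congr 1
  simp only [AddMonoidHom.sub_apply, AddMonoidHom.smul_apply, map_add, smul_eq_mul]
  ring

lemma homDer_zsmul (K : Type*) [Field K] {M : Type*} [AddCommGroup M]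
    (ρ : M →+ ℤ) (e : M) (z : ℤ) :
    homDer K (z • ρ) e = z • homDer K ρ e := by
  refine AddMonoidAlgebra.lhom_ext' fun m => LinearMap.ext fun k => ?_
  rw [LinearMap.comp_apply, LinearMap.comp_apply, AddMonoidAlgebra.lsingle_apply,
    LinearMap.smul_apply, homDer_single, homDer_single, AddMonoidHom.smul_apply,
    smul_smul]
  rfl

/-- the coefficient `b` sequence -/
def Baux (c : ℤ) (d : ℕ) (m : ℕ) : ℤ := if m = 0 then 0 else c * d.choose (m - 1)

/-- the functional of the `m`-th homogeneous component, divided by `m!` -/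
def rAux {M : Type*} [AddCommGroup M] (ρ₁ ρ₂ : M →+ ℤ) (c : ℤ) (d : ℕ) (m : ℕ) :
    M →+ ℤ :=
  (d.choose m : ℤ) • ρ₂ - Baux c d m • ρ₁

/-- the functional of the `m`-th iterated bracket -/
def sAux {M : Type*} [AddCommGroup M] (ρ₁ ρ₂ : M →+ ℤ) (e₁ e₂ : M) : ℕ → (M →+ ℤ)
  | 0 => ρ₂
  | m + 1 =>
      ρ₁ (e₂ + m • e₁) • sAux ρ₁ ρ₂ e₁ e₂ m - sAux ρ₁ ρ₂ e₁ e₂ m e₁ • ρ₁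

lemma key1 (d j : ℕ) : ((d : ℤ) - j) * d.choose j = (j + 1) * d.choose (j + 1) := by
  rcases le_or_gt j d with h | h
  · have h2 := Nat.choose_succ_right_eq d j
    zify [h] at h2
    linarith
  · rw [Nat.choose_eq_zero_of_lt h, Nat.choose_eq_zero_of_lt (by omega)]
    simp

lemma key2 (c : ℤ) (d m : ℕ) :
    ((d : ℤ) - m) * Baux c d m + (d.choose m : ℤ) * c + Baux c d m
      = (m + 1) * Baux c d (m + 1) := by
  cases m with
  | zero => simp [Baux]
  | succ j =>
      simp only [Baux, Nat.succ_ne_zero, if_false, Nat.add_sub_cancel]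
      push_cast
      linear_combination c * key1 d j

lemma iterAux (K : Type*) [Field K] {M : Type*} [AddCommGroup M]
    (ρ₁ ρ₂ : M →+ ℤ) (e₁ e₂ : M) (m : ℕ) :
    (fun W => homDer K ρ₁ e₁ ∘ₗ W - W ∘ₗ homDer K ρ₁ e₁)^[m] (homDer K ρ₂ e₂)
      = homDer K (sAux ρ₁ ρ₂ e₁ e₂ m) (e₂ + m • e₁) := by
  induction m with
  | zero => simp [sAux]
  | succ m ih =>
      rw [Function.iterate_succ_apply', ih]
      show homDer K ρ₁ e₁ ∘ₗ _ - _ ∘ₗ homDer K ρ₁ e₁ = _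
      rw [homDer_bracket]
      congr 1
      rw [add_assoc, ← succ_nsmul]

lemma s_eq {M : Type*} [AddCommGroup M] (ρ₁ ρ₂ : M →+ ℤ) (e₁ e₂ : M)
    (h₁ : ρ₁ e₁ = -1) (d : ℕ) (hd : ρ₁ e₂ = (d : ℤ)) (m : ℕ) :
    sAux ρ₁ ρ₂ e₁ e₂ m = (m.factorial : ℤ) • rAux ρ₁ ρ₂ (ρ₂ e₁) d m := by
  induction m with
  | zero => simp [sAux, rAux, Baux]
  | succ m ih =>
      have hval : ρ₁ (e₂ + m • e₁) = (d : ℤ) - m := by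
        rw [map_add, map_nsmul, hd, h₁]
        simp [sub_eq_add_neg]
      ext x
      simp only [sAux, ih, hval, rAux, AddMonoidHom.sub_apply, AddMonoidHom.smul_apply,
        smul_eq_mul, h₁, Nat.factorial_succ]
      push_cast
      linear_combination (m.factorial : ℤ) * ρ₂ x * key1 d m
        - (m.factorial : ℤ) * ρ₁ x * key2 (ρ₂ e₁) d m

/-- with `U = ∂_{ρ₁,e₁}`, `V = ∂_{ρ₂,e₂}`, `⟨ρ₁,e₁⟩ = ⟨ρ₂,e₂⟩ = −1`,
`c₂ = ⟨ρ₂,e₁⟩ ≥ 1`, `δ = ⟨ρ₁,e₂⟩ + 1 = d + 1`, the derivation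
`∂ = Ad_{exp(U)}(V) = exp(ad_U)(V) = Σ_{m=0}^{δ} (1/m!) ad_U^m(V)` decomposes into
nonzero homogeneous components exactly in the degrees `e₂ + m e₁`, `m = 0, …, δ`;
hence its Newton polytope is the segment `[e₂, e₂ + δ e₁]`. -/
theorem stmt11 {K : Type*} [Field K] [CharZero K] {M : Type*} [AddCommGroup M]
    (ρ₁ ρ₂ : M →+ ℤ) (e₁ e₂ : M)
    (h₁ : ρ₁ e₁ = -1) (h₂ : ρ₂ e₂ = -1)
    (hc : 1 ≤ ρ₂ e₁)
    (d : ℕ) (hd : ρ₁ e₂ = (d : ℤ)) :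
    ∃ r : ℕ → (M →+ ℤ), (∀ m : ℕ, m ≤ d + 1 → r m ≠ 0) ∧
      ∑ m ∈ Finset.range (d + 2),
          ((m.factorial : K)⁻¹) •
            ((fun W => homDer K ρ₁ e₁ ∘ₗ W - W ∘ₗ homDer K ρ₁ e₁)^[m] (homDer K ρ₂ e₂))
        = ∑ m ∈ Finset.range (d + 2), homDer K (r m) (e₂ + m • e₁) := by
  refine ⟨rAux ρ₁ ρ₂ (ρ₂ e₁) d, ?_, ?_⟩
  · intro m hm h
    have h0 : rAux ρ₁ ρ₂ (ρ₂ e₁) d m e₁ = 0 := by rw [h]; rfl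
    have hval : rAux ρ₁ ρ₂ (ρ₂ e₁) d m e₁
        = (d.choose m : ℤ) * ρ₂ e₁ + Baux (ρ₂ e₁) d m := by
      simp only [rAux, AddMonoidHom.sub_apply, AddMonoidHom.smul_apply, smul_eq_mul, h₁]
      ring
    have hpos : 0 < (d.choose m : ℤ) * ρ₂ e₁ + Baux (ρ₂ e₁) d m := by
      rcases Nat.lt_or_ge m (d + 1) with hle | hge
      · have hC : 0 < d.choose m := Nat.choose_pos (Nat.lt_succ_iff.mp hle)
        have hB : 0 ≤ Baux (ρ₂ e₁) d m := by
          unfold Baux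
          split
          · exact le_refl 0
          · positivity
        have : (1 : ℤ) ≤ (d.choose m : ℤ) * ρ₂ e₁ := by
          have : (1 : ℤ) ≤ (d.choose m : ℤ) := by exact_mod_cast hC
          nlinarith
        linarith
      · have hmeq : m = d + 1 := le_antisymm hm hge
        subst hmeq
        have hC : d.choose (d + 1) = 0 := Nat.choose_eq_zero_of_lt (Nat.lt_succ_self d)
        have hB : Baux (ρ₂ e₁) d (d + 1) = ρ₂ e₁ := by
          simp [Baux]
        rw [hC, hB]
        simpa using (show (0 : ℤ) < ρ₂ e₁ by omega)
    rw [hval] at h0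
    exact hpos.ne' h0
  · refine Finset.sum_congr rfl fun m _ => ?_
    rw [iterAux, s_eq ρ₁ ρ₂ e₁ e₂ h₁ d hd, homDer_zsmul,
      ← Int.cast_smul_eq_zsmul K, smul_smul]
    push_cast
    rw [inv_mul_cancel₀ (by exact_mod_cast m.factorial_ne_zero), one_smul]
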